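/- Let H be a bialgebra over a field K, C a right H-comodule coalgebra with coaction ρ(c) = Σ c₀ ⊗ c₁, and E a finite-dimensional subcoalgebra of C. Let D = H*·E be the right H-subcomodule of C generated by E under the induced left H*-action α·c = Σ α(c₁)c₀. Then D is finite-dimensional and is a subcoalgebra of C. -/

import Mathlib

open TensorProduct LinearMap

/-- `D` is a subcoalgebra of the `K`-coalgebra `C`. -/
def IsSubcoalgebra {K C : Type*} [CommSemiring K] [AddCommMonoid C] [Module K C]
    [Coalgebra K C] (D : Submodule K C) : Prop :=
  ∀ x ∈ D, Coalgebra.comul (R := K) x ∈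
    LinearMap.range (TensorProduct.map D.subtype D.subtype)

/-- The induced left `H^*`-action on a right `H`-comodule: `α · c = Σ α(c₁) c₀`. -/
noncomputable def dualAction {K H C : Type*} [Field K] [Ring H] [Algebra K H]
    [AddCommGroup C] [Module K C] (ρ : C →ₗ[K] C ⊗[K] H)
    (α : Module.Dual K H) (c : C) : C :=
  (TensorProduct.rid K C) ((LinearMap.lTensor C α) (ρ c))

/-- Local representativity: a functional `α` composed with multiplication, restricted to a
finite-dimensional subspace `V × V`, decomposes as a finite sum of products of functionals. -/
lemma exists_dual_decomp {K H : Type*} [Field K] [Ring H] [Algebra K H]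
    (V : Submodule K H) [Module.Finite K V] (α : Module.Dual K H) :
    ∃ (n : ℕ) (γ δ : Fin n → Module.Dual K H),
      ∀ h ∈ V, ∀ k ∈ V, α (h * k) = ∑ j, γ j h * δ j k := by
  classical
  obtain ⟨g, hg⟩ := V.subtype.exists_leftInverse_of_injective V.ker_subtype
  set β : Module.Dual K (V ⊗[K] V) :=
    α ∘ₗ (LinearMap.mul' K H) ∘ₗ TensorProduct.map V.subtype V.subtype with hβ
  set t := (TensorProduct.dualDistribEquiv K V V).symm β with ht
  have hβt : TensorProduct.dualDistrib K V V t = β :=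
    (TensorProduct.dualDistribEquiv K V V).apply_symm_apply β
  obtain ⟨S, hS⟩ := TensorProduct.exists_finset t
  refine ⟨S.card, (fun i => (Subtype.val (S.equivFin.symm i)).1 ∘ₗ g),
    (fun i => (Subtype.val (S.equivFin.symm i)).2 ∘ₗ g), fun h hh k hk => ?_⟩
  have h1 : α (h * k) = β (⟨h, hh⟩ ⊗ₜ[K] ⟨k, hk⟩) := by
    simp [hβ, LinearMap.mul'_apply]
  rw [h1, ← hβt, hS, map_sum, LinearMap.sum_apply]
  rw [← Finset.sum_coe_sort S (fun p => (TensorProduct.dualDistrib K V V (p.1 ⊗ₜ[K] p.2)) (⟨h, hh⟩ ⊗ₜ[K] ⟨k, hk⟩))]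
  rw [← S.equivFin.symm.sum_comp (fun (p : S) => (TensorProduct.dualDistrib K V V ((Subtype.val p).1 ⊗ₜ[K] (Subtype.val p).2)) (⟨h, hh⟩ ⊗ₜ[K] ⟨k, hk⟩))]
  refine Finset.sum_congr rfl fun i _ => ?_
  set p := Subtype.val (S.equivFin.symm i)
  have gh : g h = ⟨h, hh⟩ := by
    simpa using LinearMap.congr_fun hg ⟨h, hh⟩
  have gk : g k = ⟨k, hk⟩ := by
    simpa using LinearMap.congr_fun hg ⟨k, hk⟩
  have e1 : (p.1 ∘ₗ g) h = p.1 ⟨h, hh⟩ := by simp [LinearMap.comp_apply, gh]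
  have e2 : (p.2 ∘ₗ g) k = p.2 ⟨k, hk⟩ := by simp [LinearMap.comp_apply, gk]
  simp [TensorProduct.dualDistrib_apply, e1, e2, gh, gk, p]

/-- Interchanging comultiplication with the `α`-contraction. -/
lemma comul_rid_lTensor {K H C : Type*} [Field K] [Ring H] [Algebra K H]
    [AddCommGroup C] [Module K C] (Δ : C →ₗ[K] C ⊗[K] C) (α : Module.Dual K H)
    (t : C ⊗[K] H) :
    Δ ((TensorProduct.rid K C) ((LinearMap.lTensor C α) t)) =
      (TensorProduct.rid K (C ⊗[K] C))
        ((LinearMap.lTensor (C ⊗[K] C) α) ((LinearMap.rTensor H Δ) t)) := by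
  induction t using TensorProduct.induction_on with
  | zero => simp
  | tmul c h => simp
  | add x y hx hy => simp [map_add, hx, hy]

/-- The key tensor computation. -/
lemma key_tensor_calc {K H C : Type*} [Field K] [Ring H] [Algebra K H]
    [AddCommGroup C] [Module K C] (W : Submodule K C) (V : Submodule K H)
    (α : Module.Dual K H) (n : ℕ) (γ δ : Fin n → Module.Dual K H)
    (hα : ∀ h ∈ V, ∀ k ∈ V, α (h * k) = ∑ j, γ j h * δ j k)
    (u v : W ⊗[K] V) :
    (TensorProduct.rid K (C ⊗[K] C)) ((LinearMap.lTensor (C ⊗[K] C) α)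
      ((TensorProduct.map LinearMap.id (LinearMap.mul' K H))
        ((TensorProduct.tensorTensorTensorComm K C H C H)
          ((TensorProduct.mapIncl W V u) ⊗ₜ[K] (TensorProduct.mapIncl W V v))))) =
    ∑ j, ((TensorProduct.rid K C) ((LinearMap.lTensor C (γ j))
        (TensorProduct.mapIncl W V u))) ⊗ₜ[K]
      ((TensorProduct.rid K C) ((LinearMap.lTensor C (δ j))
        (TensorProduct.mapIncl W V v))) := by
  induction u using TensorProduct.induction_on with
  | zero => simp
  | add x y hx hy => simp only [map_add, add_tmul, hx, hy, ← Finset.sum_add_distrib]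
  | tmul w h =>
    induction v using TensorProduct.induction_on with
    | zero => simp
    | add x y hx hy => simp only [map_add, tmul_add, hx, hy, ← Finset.sum_add_distrib]
    | tmul w' h' =>
      simp only [TensorProduct.mapIncl, TensorProduct.map_tmul,
        TensorProduct.tensorTensorTensorComm_tmul, Submodule.coe_subtype,
        LinearMap.mul'_apply, LinearMap.lTensor_tmul, TensorProduct.rid_tmul,
        LinearMap.id_coe, id_eq]
      rw [hα _ h.2 _ h'.2]
      rw [Finset.sum_smul]
      refine Finset.sum_congr rfl fun j _ => ?_
      simp [smul_tmul', smul_smul, mul_comm]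

/-- (Section 4, proof of the finiteness theorem.)
Let `H` be a bialgebra over a field `K`, `C` a right `H`-comodule coalgebra with coaction
`ρ(c) = Σ c₀ ⊗ c₁`, and `E` a finite-dimensional subcoalgebra of `C`.  Let `D = H^* · E`
be the right `H`-subcomodule of `C` generated by `E` under the induced left `H^*`-action
`α · c = Σ α(c₁) c₀`.  Then `D` is finite-dimensional and is a subcoalgebra of `C`. -/
theorem dualAction_span_isSubcoalgebra
    (K : Type*) [Field K] (H : Type*) [Ring H] [Bialgebra K H]
    (C : Type*) [AddCommGroup C] [Module K C] [Coalgebra K C]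
    (ρ : C →ₗ[K] C ⊗[K] H)
    (hcoassoc : ∀ c : C, (TensorProduct.assoc K C H H)
        ((LinearMap.rTensor H ρ) (ρ c)) =
        (LinearMap.lTensor C (Coalgebra.comul (R := K))) (ρ c))
    (hcounit : ∀ c : C,
        (TensorProduct.rid K C) ((LinearMap.lTensor C (Coalgebra.counit (R := K))) (ρ c)) = c)
    (hcompat : ∀ c : C,
        (TensorProduct.map LinearMap.id (LinearMap.mul' K H))
          ((TensorProduct.tensorTensorTensorComm K C H C H)
            ((TensorProduct.map ρ ρ) (Coalgebra.comul (R := K) c))) =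
        (LinearMap.rTensor H (Coalgebra.comul (R := K))) (ρ c))
    (hcompat' : ∀ c : C,
        (TensorProduct.lid K H) ((LinearMap.rTensor H (Coalgebra.counit (R := K))) (ρ c)) =
        (Coalgebra.counit (R := K) c) • (1 : H))
    (E : Submodule K C) (hE : IsSubcoalgebra E) (hEfd : FiniteDimensional K E)
    (D : Submodule K C)
    (hD : D = Submodule.span K {x : C | ∃ (α : Module.Dual K H) (c : C),
        c ∈ E ∧ x = dualAction ρ α c}) :
    FiniteDimensional K D ∧ IsSubcoalgebra D := by
  classical
  -- choose finite-dimensional W ⊆ C and V ⊆ H with ρ(E) ⊆ W ⊗ V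
  have hEfg : E.FG := (Submodule.fg_iff_finiteDimensional E).mpr hEfd
  have hmap : (E.map ρ).FG := hEfg.map ρ
  obtain ⟨T, hT⟩ := hmap
  obtain ⟨W, V, hWf, hVf, hTsub⟩ :=
    TensorProduct.exists_finite_submodule_of_setFinite (↑T : Set (C ⊗[K] H)) T.finite_toSet
  have hρE : ∀ c ∈ E, ∃ u : W ⊗[K] V, TensorProduct.mapIncl W V u = ρ c := by
    intro c hc
    have h1 : ρ c ∈ Submodule.span K (↑T : Set (C ⊗[K] H)) := by
      rw [hT]; exact Submodule.mem_map_of_mem hc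
    exact LinearMap.mem_range.mp
      (Submodule.span_le.mpr (fun x hx => hTsub hx) h1)
  haveI : Module.Finite K W := hWf
  haveI : Module.Finite K V := hVf
  -- every contraction of an element of W ⊗ V lands in W
  have hmemW : ∀ (β : Module.Dual K H) (u : W ⊗[K] V),
      (TensorProduct.rid K C) ((LinearMap.lTensor C β) (TensorProduct.mapIncl W V u)) ∈ W := by
    intro β u
    induction u using TensorProduct.induction_on with
    | zero => simp
    | tmul w h =>
      simpa [TensorProduct.mapIncl] using W.smul_mem (β ↑h) w.2
    | add x y hx hy =>
      rw [map_add, map_add, map_add]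
      exact add_mem hx hy
  have hDW : D ≤ W := by
    rw [hD]
    refine Submodule.span_le.mpr ?_
    rintro x ⟨α, c, hc, rfl⟩
    obtain ⟨u, hu⟩ := hρE c hc
    show (TensorProduct.rid K C) ((LinearMap.lTensor C α) (ρ c)) ∈ W
    rw [← hu]
    exact hmemW α u
  refine ⟨Submodule.finiteDimensional_of_le hDW, ?_⟩
  -- subcoalgebra property: reduce to the spanning set
  suffices hgen : ∀ x ∈ ({x : C | ∃ (α : Module.Dual K H) (c : C),
      c ∈ E ∧ x = dualAction ρ α c} : Set C),
      Coalgebra.comul (R := K) x ∈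
        LinearMap.range (TensorProduct.map D.subtype D.subtype) by
    intro x hx
    have hle : D ≤ (LinearMap.range (TensorProduct.map D.subtype D.subtype)).comap
        (Coalgebra.comul (R := K) (A := C)) := by
      nth_rewrite 1 [hD]
      exact Submodule.span_le.mpr hgen
    exact hle hx
  rintro x ⟨α, c, hc, rfl⟩
  obtain ⟨n, γ, δ, hα⟩ := exists_dual_decomp V α
  show Coalgebra.comul ((TensorProduct.rid K C) ((LinearMap.lTensor C α) (ρ c))) ∈ _
  rw [comul_rid_lTensor (Coalgebra.comul (R := K)) α (ρ c), ← hcompat c]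
  obtain ⟨y, hy⟩ := hE c hc
  rw [← hy]
  clear hy
  induction y using TensorProduct.induction_on with
  | zero => simp
  | add a b ha hb =>
    simp only [map_add]
    exact add_mem ha hb
  | tmul a b =>
    obtain ⟨u, hu⟩ := hρE ↑a a.2
    obtain ⟨v, hv⟩ := hρE ↑b b.2
    have step : (TensorProduct.map ρ ρ)
        ((TensorProduct.map E.subtype E.subtype) (a ⊗ₜ[K] b)) =
        (TensorProduct.mapIncl W V u) ⊗ₜ[K] (TensorProduct.mapIncl W V v) := by
      simp only [TensorProduct.map_tmul, Submodule.coe_subtype]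
      rw [hu, hv]
    rw [step, key_tensor_calc W V α n γ δ hα u v]
    refine Submodule.sum_mem _ fun j _ => ?_
    have h1 : (TensorProduct.rid K C) ((LinearMap.lTensor C (γ j))
        (TensorProduct.mapIncl W V u)) ∈ D := by
      rw [hu, hD]
      exact Submodule.subset_span ⟨γ j, ↑a, a.2, rfl⟩
    have h2 : (TensorProduct.rid K C) ((LinearMap.lTensor C (δ j))
        (TensorProduct.mapIncl W V v)) ∈ D := by
      rw [hv, hD]
      exact Submodule.subset_span ⟨δ j, ↑b, b.2, rfl⟩
    exact ⟨(⟨_, h1⟩ : D) ⊗ₜ[K] (⟨_, h2⟩ : D), by simp⟩
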